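/- Let \sigma be a locally finite Borel measure on (0,\infty), \mu > 0, r_0 > 0, and let F, G : [0,1] \to [0,\infty) be continuous. Suppose that for every r \ge r_0, \int_0^r F(t/r)\, d\sigma(t) \le \int_0^r G(t/r)\, d\sigma(t). Then for every \bar r \ge r_0, \int_0^{\bar r} \left( \int_{t/\bar r}^{\min\{1, t/r_0\}} (G(s) - F(s)) s^{\mu-1} ds \right) \frac{d\sigma(t)}{t^\mu} \ge 0. -/

import Mathlib

open Set MeasureTheory intervalIntegral

lemma stmt18_subst (μ : ℝ) (H : ℝ → ℝ) (hH : Continuous H)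
    (t a b : ℝ) (ht : 0 < t) (ha : 0 < a) (hab : a ≤ b) :
    ∫ r in a..b, H (t / r) * r ^ (-(μ + 1)) =
      (∫ s in (t / b)..(t / a), H s * s ^ (μ - 1)) / t ^ μ := by
  have hb : 0 < b := lt_of_lt_of_le ha hab
  have huIcc : uIcc a b = Icc a b := uIcc_of_le hab
  have hpos : ∀ x ∈ uIcc a b, 0 < x := by
    rw [huIcc]; intro x hx; exact lt_of_lt_of_le ha hx.1
  set f : ℝ → ℝ := fun r => t / r with hf
  set f' : ℝ → ℝ := fun r => t * -(r ^ 2)⁻¹ with hf'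
  set g : ℝ → ℝ := fun s => H s * s ^ (μ - 1) with hg
  have hderiv : ∀ x ∈ uIcc a b, HasDerivAt f (f' x) x := by
    intro x hx
    have hx0 : x ≠ 0 := ne_of_gt (hpos x hx)
    simpa [hf, hf', div_eq_mul_inv] using (hasDerivAt_inv hx0).const_mul t
  have hcont' : ContinuousOn f' (uIcc a b) := by
    apply ContinuousOn.mul continuousOn_const
    apply ContinuousOn.neg
    apply ContinuousOn.inv₀ (by fun_prop)
    intro x hx; exact pow_ne_zero 2 (ne_of_gt (hpos x hx))
  have himg : f '' uIcc a b ⊆ Ioi 0 := by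
    rintro - ⟨x, hx, rfl⟩
    exact div_pos ht (hpos x hx)
  have hcontg : ContinuousOn g (f '' uIcc a b) := by
    apply ContinuousOn.mono _ himg
    apply (hH.continuousOn).mul
    exact ContinuousOn.rpow_const continuousOn_id
      (fun x hx => Or.inl (ne_of_gt hx))
  have key := integral_comp_smul_deriv' hderiv hcont' hcontg
  have heq : ∀ x ∈ uIcc a b,
      f' x • (g ∘ f) x = (-(t ^ μ)) * (H (t / x) * x ^ (-(μ + 1))) := by
    intro x hx
    have hx0 : 0 < x := hpos x hx
    have h1 : (t / x) ^ (μ - 1) = t ^ (μ - 1) / x ^ (μ - 1) :=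
      Real.div_rpow ht.le hx0.le _
    have h2 : t ^ μ = t * t ^ (μ - 1) := by
      nth_rewrite 1 [show μ = 1 + (μ - 1) by ring]
      rw [Real.rpow_add ht, Real.rpow_one]
    have h3 : x ^ (-(μ + 1)) = (x ^ 2 * x ^ (μ - 1))⁻¹ := by
      rw [Real.rpow_neg hx0.le, show μ + 1 = (2 : ℕ) + (μ - 1) by push_cast; ring,
        Real.rpow_add hx0, Real.rpow_natCast]
    have hxp : (0:ℝ) < x ^ (μ - 1) := Real.rpow_pos_of_pos hx0 _
    simp only [hf, hf', hg, Function.comp, smul_eq_mul, h1, h2, h3]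
    field_simp
  have hzero : t ^ μ ≠ 0 := ne_of_gt (Real.rpow_pos_of_pos ht μ)
  have hcongr : (∫ x in a..b, f' x • (g ∘ f) x) =
      ∫ x in a..b, (-(t ^ μ)) * (H (t / x) * x ^ (-(μ + 1))) :=
    intervalIntegral.integral_congr (fun x hx => heq x hx)
  rw [hcongr, intervalIntegral.integral_const_mul] at key
  rw [intervalIntegral.integral_symm (t / b) (t / a)] at key
  rw [eq_div_iff hzero]
  simp only [hg] at key
  linarith [key]

/-- the averaging/Fubini step in the volume-growth proof. -/
theorem stmt18 (σ : Measure ℝ) [IsLocallyFiniteMeasure σ]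
    (hσ : ∀ r : ℝ, σ (Set.Ioc 0 r) < ⊤)
    (μ r₀ : ℝ) (hμ : 0 < μ) (hr₀ : 0 < r₀)
    (F G : ℝ → ℝ) (hF : ContinuousOn F (Set.Icc 0 1))
    (hG : ContinuousOn G (Set.Icc 0 1))
    (hFpos : ∀ s ∈ Set.Icc (0:ℝ) 1, 0 ≤ F s)
    (hGpos : ∀ s ∈ Set.Icc (0:ℝ) 1, 0 ≤ G s)
    (hyp : ∀ r : ℝ, r₀ ≤ r →
        (∫ t in Set.Ioc 0 r, F (t / r) ∂σ) ≤ ∫ t in Set.Ioc 0 r, G (t / r) ∂σ) :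
    ∀ rb : ℝ, r₀ ≤ rb →
      0 ≤ ∫ t in Set.Ioc 0 rb,
          (∫ s in (t / rb)..(min 1 (t / r₀)), (G s - F s) * s ^ (μ - 1)) / t ^ μ
            ∂σ := by
  intro rb hrb
  have hrb0 : 0 < rb := lt_of_lt_of_le hr₀ hrb
  -- clamp to [0,1]
  set c : ℝ → ℝ := fun x => max 0 (min 1 x) with hcdef
  have hc_cont : Continuous c := by fun_prop
  have hc_mem : ∀ x, c x ∈ Icc (0:ℝ) 1 := fun x =>
    ⟨le_max_left _ _, max_le zero_le_one (min_le_left _ _)⟩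
  have hc_eq : ∀ x ∈ Icc (0:ℝ) 1, c x = x := by
    intro x hx
    simp only [hcdef]
    rw [min_eq_right hx.2, max_eq_right hx.1]
  set F' : ℝ → ℝ := fun x => F (c x) with hF'def
  set G' : ℝ → ℝ := fun x => G (c x) with hG'def
  have hF'c : Continuous F' := hF.comp_continuous hc_cont hc_mem
  have hG'c : Continuous G' := hG.comp_continuous hc_cont hc_mem
  have hF'eq : ∀ x ∈ Icc (0:ℝ) 1, F' x = F x := fun x hx => by
    simp only [hF'def, hc_eq x hx]
  have hG'eq : ∀ x ∈ Icc (0:ℝ) 1, G' x = G x := fun x hx => by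
    simp only [hG'def, hc_eq x hx]
  set S : Set ℝ := Ioc 0 rb with hSdef
  set T : Set ℝ := Ioc r₀ rb with hTdef
  haveI hfinS : IsFiniteMeasure (σ.restrict S) :=
    ⟨by rw [Measure.restrict_apply_univ]; exact hσ rb⟩
  haveI hfinT : IsFiniteMeasure (volume.restrict T) :=
    ⟨by rw [Measure.restrict_apply_univ]; exact measure_Ioc_lt_top⟩
  set Kf : (ℝ → ℝ) → ℝ × ℝ → ℝ := fun H p =>
    {q : ℝ × ℝ | q.1 ≤ q.2}.indicator (fun q => H (q.1 / q.2) * q.2 ^ (-(μ + 1))) p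
    with hKfdef
  set P : Measure (ℝ × ℝ) := (σ.restrict S).prod (volume.restrict T) with hPdef
  -- integrability on the product
  have hIntK : ∀ H : ℝ → ℝ, Continuous H → ∀ M : ℝ, (∀ x, |H x| ≤ M) →
      Integrable (Kf H) P := by
    intro H hHc M hM
    have hM0 : 0 ≤ M := le_trans (abs_nonneg _) (hM 0)
    have hmeas : AEStronglyMeasurable (Kf H) P := by
      apply AEStronglyMeasurable.indicator _ (measurableSet_le measurable_fst measurable_snd)
      rw [hPdef, Measure.prod_restrict]
      apply ContinuousOn.aestronglyMeasurable _ (measurableSet_Ioc.prod measurableSet_Ioc)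
      apply ContinuousOn.mul
      · apply hHc.comp_continuousOn
        exact ContinuousOn.div continuous_fst.continuousOn continuous_snd.continuousOn
          (fun p hp => ne_of_gt (hr₀.trans hp.2.1))
      · exact ContinuousOn.rpow_const continuous_snd.continuousOn
          (fun p hp => Or.inl (ne_of_gt (hr₀.trans hp.2.1)))
    have hbound : ∀ᵐ p ∂P, ‖Kf H p‖ ≤ M * r₀ ^ (-(μ + 1)) := by
      rw [hPdef, Measure.prod_restrict]
      filter_upwards [ae_restrict_mem (measurableSet_Ioc.prod measurableSet_Ioc)] with p hp
      have hp2 : r₀ < p.2 := hp.2.1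
      by_cases hple : p.1 ≤ p.2
      · rw [hKfdef]
        simp only []
        rw [Set.indicator_of_mem (show p ∈ {q : ℝ × ℝ | q.1 ≤ q.2} from hple)]
        rw [Real.norm_eq_abs, abs_mul]
        apply mul_le_mul (hM _) _ (abs_nonneg _) hM0
        rw [abs_of_nonneg (Real.rpow_nonneg (le_trans hr₀.le hp2.le) _)]
        exact Real.rpow_le_rpow_of_nonpos hr₀ hp2.le (by linarith)
      · rw [hKfdef]
        simp only []
        rw [Set.indicator_of_notMem (show p ∉ {q : ℝ × ℝ | q.1 ≤ q.2} from hple)]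
        simp only [norm_zero]
        exact mul_nonneg hM0 (Real.rpow_nonneg hr₀.le _)
    exact (integrable_const _).mono' hmeas hbound
  -- Step A : pointwise in r comparison of the t-integrals
  have stepA : ∀ r ∈ T,
      (∫ t, Kf F' (t, r) ∂(σ.restrict S)) ≤ ∫ t, Kf G' (t, r) ∂(σ.restrict S) := by
    intro r hr
    have hr0 : 0 < r := hr₀.trans hr.1
    have hcomp : ∀ H' H : ℝ → ℝ, (∀ x ∈ Icc (0:ℝ) 1, H' x = H x) →
        (∫ t, Kf H' (t, r) ∂(σ.restrict S)) =
          (∫ t in Ioc 0 r, H (t / r) ∂σ) * r ^ (-(μ + 1)) := by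
      intro H' H hH'H
      have h1 : ∀ t : ℝ, Kf H' (t, r) =
          (Iic r).indicator (fun t => H' (t / r) * r ^ (-(μ + 1))) t := by
        intro t
        by_cases h : t ≤ r
        · rw [hKfdef]
          simp only []
          rw [Set.indicator_of_mem (show ((t, r) : ℝ × ℝ) ∈ {q : ℝ × ℝ | q.1 ≤ q.2} from h),
            Set.indicator_of_mem (show t ∈ Iic r from h)]
        · rw [hKfdef]
          simp only []
          rw [Set.indicator_of_notMem (show ((t, r) : ℝ × ℝ) ∉ {q : ℝ × ℝ | q.1 ≤ q.2} from h),
            Set.indicator_of_notMem (show t ∉ Iic r from h)]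
      simp_rw [h1]
      rw [MeasureTheory.integral_indicator measurableSet_Iic, Measure.restrict_restrict measurableSet_Iic]
      have hset : Iic r ∩ S = Ioc 0 r := by
        rw [hSdef, Set.inter_comm, Set.Ioc_inter_Iic, min_eq_right hr.2]
      rw [hset, MeasureTheory.integral_mul_const]
      congr 1
      apply setIntegral_congr_fun measurableSet_Ioc
      intro t ht
      exact hH'H _ ⟨div_nonneg ht.1.le hr0.le, (div_le_one hr0).2 ht.2⟩
    rw [hcomp F' F hF'eq, hcomp G' G hG'eq]
    exact mul_le_mul_of_nonneg_right (hyp r hr.1.le) (Real.rpow_nonneg hr0.le _)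
  -- Step B : for each t, the r-integral computes to the target inner integral
  have stepB : ∀ H : ℝ → ℝ, Continuous H → ∀ t ∈ S,
      (∫ r, Kf H (t, r) ∂(volume.restrict T)) =
        (∫ s in (t / rb)..(min 1 (t / r₀)), H s * s ^ (μ - 1)) / t ^ μ := by
    intro H hHc t ht
    have ht0 : 0 < t := ht.1
    have h1 : ∀ r : ℝ, Kf H (t, r) =
        (Ici t).indicator (fun r => H (t / r) * r ^ (-(μ + 1))) r := by
      intro r
      by_cases h : t ≤ r
      · rw [hKfdef]
        simp only []
        rw [Set.indicator_of_mem (show ((t, r) : ℝ × ℝ) ∈ {q : ℝ × ℝ | q.1 ≤ q.2} from h),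
          Set.indicator_of_mem (show r ∈ Ici t from h)]
      · rw [hKfdef]
        simp only []
        rw [Set.indicator_of_notMem (show ((t, r) : ℝ × ℝ) ∉ {q : ℝ × ℝ | q.1 ≤ q.2} from h),
          Set.indicator_of_notMem (show r ∉ Ici t from h)]
    simp_rw [h1]
    rw [MeasureTheory.integral_indicator measurableSet_Ici, Measure.restrict_restrict measurableSet_Ici]
    set a : ℝ := max r₀ t with hadef
    have ha0 : 0 < a := lt_of_lt_of_le hr₀ (le_max_left _ _)
    have harb : a ≤ rb := max_le hrb ht.2
    have hsetae : (Ici t ∩ T : Set ℝ) =ᵐ[volume] Ioc a rb := by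
      rcases le_or_gt t r₀ with h | h
      · have he : Ici t ∩ T = Ioc r₀ rb := by
          rw [hTdef]
          apply Set.inter_eq_self_of_subset_right
          intro r hrT
          exact le_trans h hrT.1.le
        rw [he, show a = r₀ from max_eq_left h]
        exact Filter.EventuallyEq.rfl
      · have he : Ici t ∩ T = Icc t rb := by
          rw [hTdef]
          ext r
          simp only [Set.mem_inter_iff, Set.mem_Ici, Set.mem_Ioc, Set.mem_Icc]
          constructor
          · rintro ⟨h1', h2'⟩; exact ⟨h1', h2'.2⟩
          · rintro ⟨h1', h2'⟩; exact ⟨h1', h.trans_le h1', h2'⟩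
        rw [he, show a = t from max_eq_right h.le]
        exact (MeasureTheory.Ioc_ae_eq_Icc).symm
    rw [setIntegral_congr_set hsetae, ← intervalIntegral.integral_of_le harb]
    rw [stmt18_subst μ H hHc t a rb ht0 ha0 harb]
    have hta : t / a = min 1 (t / r₀) := by
      rcases le_or_gt t r₀ with h | h
      · rw [show a = r₀ from max_eq_left h, min_eq_right ((div_le_one hr₀).2 h)]
      · rw [show a = t from max_eq_right h.le, div_self (ne_of_gt ht0),
          min_eq_left ((one_le_div hr₀).2 h.le)]
    rw [hta]
  -- bounds for F' and G'
  obtain ⟨MF, hMF⟩ := isCompact_Icc.exists_bound_of_continuousOn hF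
  obtain ⟨MG, hMG⟩ := isCompact_Icc.exists_bound_of_continuousOn hG
  have hMF' : ∀ x, |F' x| ≤ MF := fun x => by
    rw [← Real.norm_eq_abs]; exact hMF _ (hc_mem x)
  have hMG' : ∀ x, |G' x| ≤ MG := fun x => by
    rw [← Real.norm_eq_abs]; exact hMG _ (hc_mem x)
  have hIF : Integrable (Kf F') P := hIntK F' hF'c MF hMF'
  have hIG : Integrable (Kf G') P := hIntK G' hG'c MG hMG'
  have hIFu : Integrable (Function.uncurry fun t r => Kf F' (t, r)) P := by
    have : (Function.uncurry fun t r => Kf F' (t, r)) = Kf F' := by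
      funext p; rfl
    rw [this]; exact hIF
  have hIGu : Integrable (Function.uncurry fun t r => Kf G' (t, r)) P := by
    have : (Function.uncurry fun t r => Kf G' (t, r)) = Kf G' := by
      funext p; rfl
    rw [this]; exact hIG
  have hswapF : (∫ t, (∫ r, Kf F' (t, r) ∂(volume.restrict T)) ∂(σ.restrict S)) =
      ∫ r, (∫ t, Kf F' (t, r) ∂(σ.restrict S)) ∂(volume.restrict T) :=
    integral_integral_swap hIFu
  have hswapG : (∫ t, (∫ r, Kf G' (t, r) ∂(volume.restrict T)) ∂(σ.restrict S)) =
      ∫ r, (∫ t, Kf G' (t, r) ∂(σ.restrict S)) ∂(volume.restrict T) :=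
    integral_integral_swap hIGu
  have houtF : Integrable (fun r => ∫ t, Kf F' (t, r) ∂(σ.restrict S)) (volume.restrict T) :=
    hIF.integral_prod_right
  have houtG : Integrable (fun r => ∫ t, Kf G' (t, r) ∂(σ.restrict S)) (volume.restrict T) :=
    hIG.integral_prod_right
  have hAF : Integrable (fun t => ∫ r, Kf F' (t, r) ∂(volume.restrict T)) (σ.restrict S) :=
    hIF.integral_prod_left
  have hAG : Integrable (fun t => ∫ r, Kf G' (t, r) ∂(volume.restrict T)) (σ.restrict S) :=
    hIG.integral_prod_left
  have hmono : (∫ r, (∫ t, Kf F' (t, r) ∂(σ.restrict S)) ∂(volume.restrict T)) ≤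
      ∫ r, (∫ t, Kf G' (t, r) ∂(σ.restrict S)) ∂(volume.restrict T) := by
    apply integral_mono_ae houtF houtG
    filter_upwards [ae_restrict_mem measurableSet_Ioc] with r hr
    exact stepA r hr
  -- rewrite the target integrand
  have htarget : (∫ t in Set.Ioc 0 rb,
        (∫ s in (t / rb)..(min 1 (t / r₀)), (G s - F s) * s ^ (μ - 1)) / t ^ μ ∂σ) =
      ∫ t, ((∫ r, Kf G' (t, r) ∂(volume.restrict T)) -
        (∫ r, Kf F' (t, r) ∂(volume.restrict T))) ∂(σ.restrict S) := by
    apply setIntegral_congr_fun measurableSet_Ioc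
    intro t ht
    show (∫ s in (t / rb)..(min 1 (t / r₀)), (G s - F s) * s ^ (μ - 1)) / t ^ μ =
      (∫ r, Kf G' (t, r) ∂(volume.restrict T)) - ∫ r, Kf F' (t, r) ∂(volume.restrict T)
    have ht0 : 0 < t := ht.1
    have he1 : t / rb ∈ Icc (0:ℝ) 1 := ⟨div_nonneg ht0.le hrb0.le, (div_le_one hrb0).2 ht.2⟩
    have he2 : min 1 (t / r₀) ∈ Icc (0:ℝ) 1 :=
      ⟨le_min zero_le_one (div_nonneg ht0.le hr₀.le), min_le_left _ _⟩
    have hsub : uIcc (t / rb) (min 1 (t / r₀)) ⊆ Icc (0:ℝ) 1 := Set.uIcc_subset_Icc he1 he2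
    have hlow : ∀ x ∈ uIcc (t / rb) (min 1 (t / r₀)), (0:ℝ) < x := by
      intro x hx
      exact lt_of_lt_of_le (lt_min (div_pos ht0 hrb0) (lt_min one_pos (div_pos ht0 hr₀))) hx.1
    have hintG : IntervalIntegrable (fun s => G' s * s ^ (μ - 1)) volume (t / rb)
        (min 1 (t / r₀)) := by
      apply ContinuousOn.intervalIntegrable
      apply ContinuousOn.mul hG'c.continuousOn
      exact ContinuousOn.rpow_const continuousOn_id
        (fun x hx => Or.inl (ne_of_gt (hlow x hx)))
    have hintF : IntervalIntegrable (fun s => F' s * s ^ (μ - 1)) volume (t / rb)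
        (min 1 (t / r₀)) := by
      apply ContinuousOn.intervalIntegrable
      apply ContinuousOn.mul hF'c.continuousOn
      exact ContinuousOn.rpow_const continuousOn_id
        (fun x hx => Or.inl (ne_of_gt (hlow x hx)))
    have hcongr : (∫ s in (t / rb)..(min 1 (t / r₀)), (G s - F s) * s ^ (μ - 1)) =
        ∫ s in (t / rb)..(min 1 (t / r₀)), (G' s * s ^ (μ - 1) - F' s * s ^ (μ - 1)) := by
      apply intervalIntegral.integral_congr
      intro x hx
      show (G x - F x) * x ^ (μ - 1) = G' x * x ^ (μ - 1) - F' x * x ^ (μ - 1)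
      rw [hG'eq x (hsub hx), hF'eq x (hsub hx)]
      ring
    rw [hcongr, intervalIntegral.integral_sub hintG hintF, sub_div,
      ← stepB G' hG'c t ht, ← stepB F' hF'c t ht]
  rw [htarget, integral_sub hAG hAF, hswapF, hswapG]
  linarith [hmono]
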